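/- Fix an integer k ≥ 2, let C ⊆ (ℤ/kℤ)^n be a G-code for a finite permutation group G ≤ Sym({1,…,n}), and let H ≤ G with gcd(|H|, k) = 1 and with t orbits on {1,…,n}. Define Λ_0(C) := {v ∈ Λ(C) : vθ_H ∈ Λ(C)}, where θ_H acts on ℝ^n. Then Λ_0(C)θ_H := {vθ_H : v ∈ Λ_0(C)} is a lattice in the fixed subspace ℝ^nθ_H (a free ℤ-module of rank t whose ℝ-span is ℝ^nθ_H), and moreover Λ_0(C)θ_H = Λ(Cθ_H) ∩ ℝ^nθ_H, where Cθ_H := {cθ_H : c ∈ C} is the image of C under the mod-k Hayden operator cθ_H := (|H| mod k)^{-1} ∑_{h∈H} ch. -/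

import Mathlib

open scoped BigOperators

/-- Coordinate-permutation action: `(v · g) i = v (g⁻¹ i)`. -/
def pAct {α : Type} {n : ℕ} (g : Equiv.Perm (Fin n)) (v : Fin n → α) : Fin n → α :=
  fun i => v (g⁻¹ i)

/-- Hayden's operator on `ℝ^n`: `v θ_H = |H|⁻¹ ∑_{h ∈ H} v h`. -/
noncomputable def thetaR {n : ℕ} (H : Subgroup (Equiv.Perm (Fin n)))
    (v : Fin n → ℝ) : Fin n → ℝ :=
  fun i => (Nat.card H : ℝ)⁻¹ * ∑ᶠ h ∈ (H : Set (Equiv.Perm (Fin n))), v (h⁻¹ i)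

/-- The mod-`k` Hayden operator on `(ℤ/kℤ)^n`:
`c θ_H = (|H| mod k)⁻¹ ∑_{h ∈ H} c h`. -/
noncomputable def thetaZ {n : ℕ} (k : ℕ) (H : Subgroup (Equiv.Perm (Fin n)))
    (c : Fin n → ZMod k) : Fin n → ZMod k :=
  fun i => Ring.inverse ((Nat.card H : ZMod k)) *
    ∑ᶠ h ∈ (H : Set (Equiv.Perm (Fin n))), c (h⁻¹ i)

/-- The orbit of a coordinate `j` under the permutation group `H`. -/
def orbSet {n : ℕ} (H : Subgroup (Equiv.Perm (Fin n))) (j : Fin n) : Set (Fin n) :=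
  {m | ∃ h ∈ H, h j = m}

/-- The fixed subspace `ℝ^n θ_H` of `H`-fixed vectors. -/
def fixH {n : ℕ} (H : Subgroup (Equiv.Perm (Fin n))) : Set (Fin n → ℝ) :=
  {v | ∀ h ∈ H, pAct h v = v}

/-- Construction A: `Λ(C) = (1/√k)·{x ∈ ℤ^n : x mod k ∈ C}`. -/
noncomputable def conA {n : ℕ} (k : ℕ) (S : Set (Fin n → ZMod k)) : Set (Fin n → ℝ) :=
  {v | ∃ x : Fin n → ℤ, (fun i => ((x i : ZMod k))) ∈ S ∧
        v = fun i => (Real.sqrt k)⁻¹ * (x i : ℝ)}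

section Aux

attribute [local instance] Fintype.ofFinite

variable {n : ℕ} {H : Subgroup (Equiv.Perm (Fin n))}

lemma finsum_H {M : Type*} [AddCommMonoid M] (f : Equiv.Perm (Fin n) → M) :
    ∑ᶠ h ∈ (H : Set (Equiv.Perm (Fin n))), f h = ∑ h : H, f ↑h := by
  rw [← Set.Finite.coe_toFinset (Set.toFinite (H : Set (Equiv.Perm (Fin n)))),
    finsum_mem_coe_finset]
  apply Finset.sum_bij (fun x hx => (⟨x, by simpa using hx⟩ : H))
  · intros; exact Finset.mem_univ _
  · intro a ha b hb h; simpa using congrArg Subtype.val h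
  · intro b _; exact ⟨b.1, by simp, rfl⟩
  · intro a _; rfl

lemma cardH_pos : 0 < Nat.card H := Nat.card_pos

/-- membership in `fixH` pointwise -/
lemma fix_apply {v : Fin n → ℝ} (hv : v ∈ fixH H) {h : Equiv.Perm (Fin n)}
    (hh : h ∈ H) (i : Fin n) : v (h⁻¹ i) = v i := congrFun (hv h hh) i

lemma thetaR_apply (v : Fin n → ℝ) (i : Fin n) :
    thetaR H v i = (Nat.card H : ℝ)⁻¹ * ∑ h : H, v ((h : Equiv.Perm (Fin n))⁻¹ i) := by
  unfold thetaR
  rw [finsum_H (f := fun h => v (h⁻¹ i))]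

lemma thetaZ_apply {k : ℕ} (c : Fin n → ZMod k) (i : Fin n) :
    thetaZ k H c i = Ring.inverse ((Nat.card H : ZMod k)) *
      ∑ h : H, c ((h : Equiv.Perm (Fin n))⁻¹ i) := by
  unfold thetaZ
  rw [finsum_H (f := fun h => c (h⁻¹ i))]

lemma thetaR_mem_fixH (v : Fin n → ℝ) : thetaR H v ∈ fixH H := by
  intro g hg
  funext i
  show thetaR H v (g⁻¹ i) = thetaR H v i
  rw [thetaR_apply, thetaR_apply]
  congr 1
  exact Fintype.sum_equiv (Equiv.mulLeft (⟨g, hg⟩ : H)) _ _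
    (fun x => by simp [mul_inv_rev, Equiv.Perm.mul_apply])

lemma thetaR_of_fixed {v : Fin n → ℝ} (hv : v ∈ fixH H) : thetaR H v = v := by
  funext i
  rw [thetaR_apply]
  have : ∀ h : H, v ((h : Equiv.Perm (Fin n))⁻¹ i) = v i :=
    fun h => fix_apply hv h.2 i
  rw [Fintype.sum_congr _ _ this, Finset.sum_const, Finset.card_univ, nsmul_eq_mul,
    ← Nat.card_eq_fintype_card]
  rw [← mul_assoc, inv_mul_cancel₀ (by exact_mod_cast (cardH_pos (H := H)).ne'), one_mul]

lemma thetaZ_of_fixed {k : ℕ} (hgcd : Nat.gcd (Nat.card H) k = 1) {c : Fin n → ZMod k}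
    (hc : ∀ h ∈ H, ∀ i, c (h⁻¹ i) = c i) : thetaZ k H c = c := by
  funext i
  rw [thetaZ_apply]
  have : ∀ h : H, c ((h : Equiv.Perm (Fin n))⁻¹ i) = c i :=
    fun h => hc h.1 h.2 i
  rw [Fintype.sum_congr _ _ this, Finset.sum_const, Finset.card_univ, nsmul_eq_mul,
    ← Nat.card_eq_fintype_card, ← mul_assoc,
    Ring.inverse_mul_cancel _ ((ZMod.isUnit_iff_coprime _ _).2 hgcd), one_mul]

lemma thetaZ_mem {k : ℕ} {C : Submodule (ZMod k) (Fin n → ZMod k)}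
    (hCH : ∀ c ∈ C, ∀ g ∈ H, pAct g c ∈ C) {c : Fin n → ZMod k} (hc : c ∈ C) :
    thetaZ k H c ∈ C := by
  have : thetaZ k H c
      = Ring.inverse ((Nat.card H : ZMod k)) • ∑ h : H, pAct (h : Equiv.Perm (Fin n)) c := by
    funext i
    rw [thetaZ_apply]
    simp only [Pi.smul_apply, smul_eq_mul, Finset.sum_apply]
    rfl
  rw [this]
  exact C.smul_mem _ (Submodule.sum_mem _ (fun h _ => hCH c hc _ h.2))

end Aux

section Main

attribute [local instance] Fintype.ofFinite

/-- `Λ₀(C)θ_H` is a lattice in the fixed subspace, and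
`Λ₀(C)θ_H = Λ(Cθ_H) ∩ ℝ^n θ_H`. -/
theorem stmt12 {n t : ℕ} (k : ℕ) (hk : 2 ≤ k)
    (G H : Subgroup (Equiv.Perm (Fin n))) (hHG : H ≤ G)
    (hgcd : Nat.gcd (Nat.card H) k = 1)
    (rep : Fin t → Fin n)
    (hrep : ∀ j : Fin n, ∃! i : Fin t, j ∈ orbSet H (rep i))
    (C : Submodule (ZMod k) (Fin n → ZMod k))
    (hC : ∀ c ∈ C, ∀ g ∈ G, pAct g c ∈ C) :
    (∃ e : Fin t → (Fin n → ℝ), LinearIndependent ℝ e ∧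
      (Submodule.span ℤ (Set.range e) : Set (Fin n → ℝ))
        = thetaR H '' {v ∈ conA k (C : Set (Fin n → ZMod k)) |
            thetaR H v ∈ conA k (C : Set (Fin n → ZMod k))} ∧
      (Submodule.span ℝ (Set.range e) : Set (Fin n → ℝ)) = fixH H)
    ∧ thetaR H '' {v ∈ conA k (C : Set (Fin n → ZMod k)) |
          thetaR H v ∈ conA k (C : Set (Fin n → ZMod k))}
        = conA k (thetaZ k H '' (C : Set (Fin n → ZMod k))) ∩ fixH H := by
  classical
  have hCH : ∀ c ∈ C, ∀ g ∈ H, pAct g c ∈ C := fun c hc g hg => hC c hc g (hHG hg)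
  have hkR : (0:ℝ) < (k:ℝ) := by exact_mod_cast Nat.lt_of_lt_of_le Nat.zero_lt_two hk
  have hsq : (0:ℝ) < Real.sqrt k := Real.sqrt_pos.2 hkR
  set s : ℝ := (Real.sqrt k)⁻¹ with hs_def
  have hsne : s ≠ 0 := inv_ne_zero hsq.ne'
  -- ## Step 1: the image of θ_H equals Λ(C) ∩ fixH
  have key1 : thetaR H '' {v ∈ conA k (C : Set (Fin n → ZMod k)) |
      thetaR H v ∈ conA k (C : Set (Fin n → ZMod k))}
      = conA k (C : Set (Fin n → ZMod k)) ∩ fixH H := by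
    ext w
    constructor
    · rintro ⟨v, ⟨_, hθ⟩, rfl⟩
      exact ⟨hθ, thetaR_mem_fixH v⟩
    · rintro ⟨hw, hfix⟩
      exact ⟨w, ⟨hw, by rw [thetaR_of_fixed hfix]; exact hw⟩, thetaR_of_fixed hfix⟩
  -- ## Step 2: Λ(C) ∩ fixH = Λ(Cθ) ∩ fixH
  have key2 : conA k (C : Set (Fin n → ZMod k)) ∩ fixH H
      = conA k (thetaZ k H '' (C : Set (Fin n → ZMod k))) ∩ fixH H := by
    ext w
    constructor
    · rintro ⟨⟨x, hx, rfl⟩, hfix⟩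
      refine ⟨⟨x, ⟨_, hx, ?_⟩, rfl⟩, hfix⟩
      apply thetaZ_of_fixed hgcd
      intro h hh i
      have hw := fix_apply hfix hh i
      have : ((x (h⁻¹ i) : ℝ)) = x i := mul_left_cancel₀ hsne hw
      have hxi : x (h⁻¹ i) = x i := by exact_mod_cast this
      rw [hxi]
    · rintro ⟨⟨x, ⟨c, hc, hcx⟩, rfl⟩, hfix⟩
      refine ⟨⟨x, ?_, rfl⟩, hfix⟩
      rw [← hcx]
      exact thetaZ_mem hCH hc
  -- ## Step 3: orbit index function
  have hidx1 : ∀ j, j ∈ orbSet H (rep (Classical.choose (hrep j))) :=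
    fun j => (Classical.choose_spec (hrep j)).1
  set idx : Fin n → Fin t := fun j => Classical.choose (hrep j) with hidx_def
  have hidx2 : ∀ j i, j ∈ orbSet H (rep i) → i = idx j :=
    fun j i h => (Classical.choose_spec (hrep j)).2 i h
  have hidxrep : ∀ i, idx (rep i) = i :=
    fun i => (hidx2 (rep i) i ⟨1, H.one_mem, rfl⟩).symm
  have hidx_inv : ∀ h ∈ H, ∀ j, idx (h⁻¹ j) = idx j := by
    intro h hh j
    obtain ⟨g, hg, hgj⟩ := hidx1 j
    exact (hidx2 _ _ ⟨h⁻¹ * g, mul_mem (inv_mem hh) hg,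
      by simp [Equiv.Perm.mul_apply, hgj]; exact hgj⟩).symm
  -- any H-fixed function (into any type) is constant on orbits
  have hconst : ∀ {α : Type} (v : Fin n → α),
      (∀ h ∈ H, ∀ i, v (h⁻¹ i) = v i) → ∀ j, v j = v (rep (idx j)) := by
    intro α v hv j
    obtain ⟨g, hg, hgj⟩ := hidx1 j
    have := hv g⁻¹ (inv_mem hg) (rep (idx j))
    rw [inv_inv, hgj] at this
    exact this
  -- ## Step 4: the parametrization ψ : ℝ^t → ℝ^n
  set psi : (Fin t → ℝ) →ₗ[ℝ] (Fin n → ℝ) :=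
    { toFun := fun a => fun j => s * a (idx j)
      map_add' := by intro a b; funext j; simp [Pi.add_apply]; ring
      map_smul' := by intro r a; funext j; simp [Pi.smul_apply, smul_eq_mul]; ring }
    with hpsi_def
  have hpsi_apply : ∀ a j, psi a j = s * a (idx j) := fun a j => rfl
  have hpsi_inj : Function.Injective psi := by
    intro a b hab
    funext i
    have h := congrFun hab (rep i)
    rw [hpsi_apply, hpsi_apply, hidxrep] at h
    exact mul_left_cancel₀ hsne h
  have hpsi_fix : ∀ a, psi a ∈ fixH H := by
    intro a h hh
    funext j
    show psi a (h⁻¹ j) = psi a j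
    rw [hpsi_apply, hpsi_apply, hidx_inv h hh j]
  have hfix_eq_range : fixH H = Set.range psi := by
    ext v
    constructor
    · intro hv
      refine ⟨fun i => s⁻¹ * v (rep i), ?_⟩
      funext j
      rw [hpsi_apply, ← mul_assoc, mul_inv_cancel₀ hsne, one_mul]
      exact (hconst v (fun h hh i => fix_apply hv hh i) j).symm
    · rintro ⟨a, rfl⟩
      exact hpsi_fix a
  -- ## Step 5: the integral model N of the lattice
  set L : (Fin t → ℤ) →ₗ[ℤ] (Fin n → ZMod k) :=
    { toFun := fun a => fun j => ((a (idx j) : ℤ) : ZMod k)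
      map_add' := by intro a b; funext j; push_cast [Pi.add_apply]; ring
      map_smul' := by
        intro z a; funext j
        show (((z • a) (idx j) : ℤ) : ZMod k) = z • ((a (idx j) : ℤ) : ZMod k)
        push_cast [Pi.smul_apply, smul_eq_mul, zsmul_eq_mul]
        ring }
    with hL_def
  set N : Submodule ℤ (Fin t → ℤ) := Submodule.comap L (C.restrictScalars ℤ) with hN_def
  have hmemN : ∀ a : Fin t → ℤ,
      a ∈ N ↔ (fun j => ((a (idx j) : ℤ) : ZMod k)) ∈ C := fun a => Iff.rfl
  have hkN : ∀ a : Fin t → ℤ, (k : ℤ) • a ∈ N := by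
    intro a
    rw [hmemN]
    have : (fun j => ((((k:ℤ) • a) (idx j) : ℤ) : ZMod k)) = (0 : Fin n → ZMod k) := by
      funext j
      show ((((k:ℤ) * a (idx j)) : ℤ) : ZMod k) = 0
      push_cast
      rw [ZMod.natCast_self, zero_mul]
    rw [this]
    exact C.zero_mem
  -- ## Step 6: a basis of N
  obtain ⟨m, b⟩ := Submodule.basisOfPid (Pi.basisFun ℤ (Fin t)) N
  haveI : Module.Finite ℤ ↥N := Module.Finite.iff_fg.2 (IsNoetherian.noetherian N)
  have hmt : m = t := by
    have h1 : Module.finrank ℤ N = m := by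
      rw [Module.finrank_eq_card_basis b, Fintype.card_fin]
    have h2 : Module.finrank ℤ (Fin t → ℤ) = t := by
      rw [Module.finrank_pi, Fintype.card_fin]
    have hle : Module.finrank ℤ N ≤ t := by
      have := Submodule.finrank_le N; rwa [h2] at this
    have hkne : (k : ℤ) ≠ 0 := by exact_mod_cast (by omega : k ≠ 0)
    have hfi : Function.Injective
        (LinearMap.codRestrict N ((k:ℤ) • (LinearMap.id : (Fin t → ℤ) →ₗ[ℤ] (Fin t → ℤ)))
          (fun a => hkN a)) := by
      intro a b hab
      have h3 : (k:ℤ) • a = (k:ℤ) • b := congrArg Subtype.val hab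
      exact smul_right_injective _ hkne h3
    have hge : t ≤ Module.finrank ℤ N := by
      have := LinearMap.finrank_le_finrank_of_injective hfi; rwa [h2] at this
    omega
  set b' : Module.Basis (Fin t) ℤ N := b.reindex (finCongr hmt) with hb'_def
  -- ## Step 7: the maps from ℤ^t into ℝ^n
  set castL : (Fin t → ℤ) →ₗ[ℤ] (Fin t → ℝ) :=
    { toFun := fun a => fun i => (a i : ℝ)
      map_add' := by intro a b; funext i; push_cast [Pi.add_apply]; ring
      map_smul' := by
        intro z a; funext i
        show (((z • a) i : ℤ) : ℝ) = z • ((a i : ℤ) : ℝ)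
        push_cast [Pi.smul_apply, smul_eq_mul, zsmul_eq_mul]
        ring }
    with hcastL_def
  have hcastL_apply : ∀ (a : Fin t → ℤ) i, castL a i = ((a i : ℤ) : ℝ) := fun a i => rfl
  set Phi : (Fin t → ℤ) →ₗ[ℤ] (Fin n → ℝ) := (psi.restrictScalars ℤ).comp castL
    with hPhi_def
  have hPhi_apply : ∀ a j, Phi a j = s * ((a (idx j) : ℤ) : ℝ) := fun a j => rfl
  set e : Fin t → (Fin n → ℝ) := fun i => Phi ((b' i : Fin t → ℤ)) with he_def
  -- ## Step 8: ℤ-span of e is Φ(N)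
  have hspanZ : Submodule.span ℤ (Set.range e) = Submodule.map Phi N := by
    have h1 : Set.range e = Phi '' Set.range (fun i => ((b' i : Fin t → ℤ))) := by
      rw [← Set.range_comp]; rfl
    have h2 : Submodule.span ℤ (Set.range (fun i => ((b' i : Fin t → ℤ)))) = N := by
      have h3 : Set.range (fun i => ((b' i : Fin t → ℤ)))
          = N.subtype '' Set.range b' := by rw [← Set.range_comp]; rfl
      rw [h3, Submodule.span_image, Module.Basis.span_eq, Submodule.map_subtype_top]
    rw [h1, Submodule.span_image, h2]
  -- ## Step 9: Φ(N) = Λ(C) ∩ fixH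
  have hPhiN : (Submodule.map Phi N : Set (Fin n → ℝ))
      = conA k (C : Set (Fin n → ZMod k)) ∩ fixH H := by
    ext w
    constructor
    · rintro ⟨a, ha, rfl⟩
      constructor
      · refine ⟨fun j => a (idx j), (hmemN a).1 ha, ?_⟩
        funext j
        rw [hPhi_apply]
      · exact hpsi_fix (castL a)
    · rintro ⟨⟨x, hx, rfl⟩, hfix⟩
      have hxfix : ∀ h ∈ H, ∀ i, x (h⁻¹ i) = x i := by
        intro h hh i
        have hw := fix_apply hfix hh i
        have : ((x (h⁻¹ i) : ℝ)) = x i := mul_left_cancel₀ hsne hw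
        exact_mod_cast this
      have hxc : ∀ j, x j = x (rep (idx j)) := hconst x hxfix
      refine ⟨fun i => x (rep i), ?_, ?_⟩
      · show (fun i => x (rep i)) ∈ N
        rw [hmemN]
        have : (fun j => ((x (rep (idx j)) : ℤ) : ZMod k))
            = (fun j => ((x j : ℤ) : ZMod k)) := by
          funext j; rw [← hxc j]
        rw [this]
        exact hx
      · funext j
        rw [hPhi_apply, ← hxc j]
  -- ## Step 10: ℝ-span of e is the range of ψ
  have hQ : Submodule.span ℝ (Set.range (fun i => castL ((b' i : Fin t → ℤ)))) = ⊤ := by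
    have hsingle : ∀ i0 : Fin t,
        Pi.single i0 (1:ℝ) ∈ Submodule.span ℝ
          (Set.range (fun i => castL ((b' i : Fin t → ℤ)))) := by
      intro i0
      have hu : (k : ℤ) • Pi.single i0 (1:ℤ) ∈ N := hkN _
      have hmem : (⟨(k : ℤ) • Pi.single i0 (1:ℤ), hu⟩ : N)
          ∈ Submodule.span ℤ (Set.range b') := by
        rw [Module.Basis.span_eq]; trivial
      have hmap := Submodule.mem_map_of_mem
        (f := (castL.comp N.subtype)) hmem
      rw [← Submodule.span_image] at hmap
      have himg : (castL.comp N.subtype) '' Set.range b'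
          = Set.range (fun i => castL ((b' i : Fin t → ℤ))) := by
        rw [← Set.range_comp]; rfl
      rw [himg] at hmap
      have hmap2 : castL ((k : ℤ) • Pi.single i0 (1:ℤ))
          ∈ Submodule.span ℝ (Set.range (fun i => castL ((b' i : Fin t → ℤ)))) :=
        Submodule.span_subset_span ℤ ℝ _ hmap
      have hcast : castL ((k : ℤ) • Pi.single i0 (1:ℤ))
          = (k : ℝ) • (Pi.single i0 (1:ℝ) : Fin t → ℝ) := by
        funext j
        rw [hcastL_apply]
        by_cases hj : j = i0 <;>
          · simp [Pi.single_apply, hj, Pi.smul_apply, smul_eq_mul]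
      rw [hcast] at hmap2
      have := Submodule.smul_mem _ ((k : ℝ)⁻¹) hmap2
      rwa [smul_smul, inv_mul_cancel₀ hkR.ne', one_smul] at this
    rw [eq_top_iff, ← (Pi.basisFun ℝ (Fin t)).span_eq]
    apply Submodule.span_le.2
    rintro _ ⟨i0, rfl⟩
    rw [Pi.basisFun_apply]
    exact hsingle i0
  have hspanR : Submodule.span ℝ (Set.range e) = LinearMap.range psi := by
    have h1 : Set.range e = psi '' Set.range (fun i => castL ((b' i : Fin t → ℤ))) := by
      rw [← Set.range_comp]; rfl
    rw [h1, Submodule.span_image, hQ, Submodule.map_top]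
  -- ## Step 11: linear independence
  have hlin : LinearIndependent ℝ e := by
    rw [linearIndependent_iff_card_eq_finrank_span]
    have : Set.finrank ℝ (Set.range e)
        = Module.finrank ℝ ↥(LinearMap.range psi) := by
      unfold Set.finrank
      rw [hspanR]
    rw [Fintype.card_fin, this, LinearMap.finrank_range_of_inj hpsi_inj,
      Module.finrank_pi, Fintype.card_fin]
  -- ## Conclusion
  refine ⟨⟨e, hlin, ?_, ?_⟩, ?_⟩
  · rw [key1, hspanZ, hPhiN]
  · rw [hspanR]
    rw [hfix_eq_range]
    exact LinearMap.coe_range psi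
  · rw [key1, key2]


end Main
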